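/- For any a > 0, the inverse Laplace transform identity holds: e^{-√(a s)} = ∫_0^∞ e^{-s y} · (√a/(2√π)) y^{-3/2} e^{-a/(4y)} dy for every s > 0. -/

import Mathlib

open MeasureTheory Real Set Filter

lemma phi_surj {b c : ℝ} (hb : 0 < b) (hc : 0 < c) :
    (fun x => b * x - c / x) '' Ioi 0 = univ := by
  apply Set.eq_univ_of_forall; intro u
  have hcont : Continuous (fun t : ℝ => b * Real.exp t - c / Real.exp t) := by
    exact (continuous_const.mul Real.continuous_exp).sub
      (continuous_const.div Real.continuous_exp fun t => (Real.exp_pos t).ne')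
  have htop : Tendsto (fun t : ℝ => b * Real.exp t - c / Real.exp t) atTop atTop := by
    have h1 : Tendsto (fun t : ℝ => b * Real.exp t) atTop atTop :=
      (Real.tendsto_exp_atTop).const_mul_atTop hb
    have h2 : Tendsto (fun t : ℝ => -(c / Real.exp t)) atTop (nhds (-(c * 0))) := by
      exact ((tendsto_const_nhds.mul
        (Real.tendsto_exp_atTop.inv_tendsto_atTop)).congr (fun t => by simp [div_eq_mul_inv])).neg
    simpa [sub_eq_add_neg] using h1.atTop_add (by simpa using h2)
  have hbot : Tendsto (fun t : ℝ => b * Real.exp t - c / Real.exp t) atBot atBot := by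
    have h1 : Tendsto (fun t : ℝ => b * Real.exp t) atBot (nhds (b * 0)) :=
      tendsto_const_nhds.mul (Real.tendsto_exp_atBot)
    have h2 : Tendsto (fun t : ℝ => c / Real.exp t) atBot atTop := by
      have : Tendsto (fun t : ℝ => Real.exp (-t)) atBot atTop :=
        Real.tendsto_exp_atTop.comp tendsto_neg_atBot_atTop
      have := this.const_mul_atTop hc
      exact this.congr fun t => by rw [Real.exp_neg, div_eq_mul_inv]
    simpa [sub_eq_add_neg] using (by simpa using h1 : Tendsto (fun t:ℝ => b * Real.exp t) atBot (nhds 0)).add_atBot (tendsto_neg_atBot_iff.mpr h2)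
  obtain ⟨t, ht⟩ := (hcont.surjective htop hbot) u
  exact ⟨Real.exp t, Real.exp_pos t, ht⟩

lemma phi_deriv {b c : ℝ} {x : ℝ} (hx : x ∈ Ioi (0:ℝ)) :
    HasDerivWithinAt (fun x => b * x - c / x) (b + c / x ^ 2) (Ioi 0) x := by
  have hx0 : x ≠ 0 := ne_of_gt hx
  have h : HasDerivAt (fun x : ℝ => b * x - c / x) (b + c / x ^ 2) x := by
    have h1 : HasDerivAt (fun x : ℝ => b * x) b x := by
      simpa using (hasDerivAt_id x).const_mul b
    have h2 : HasDerivAt (fun x : ℝ => c / x) (-(c / x ^ 2)) x := by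
      have := (hasDerivAt_inv hx0).const_mul c
      simpa [div_eq_mul_inv, neg_div] using this
    exact (h1.sub h2).congr_deriv (by ring)
  exact h.hasDerivWithinAt

lemma phi_injOn {b c : ℝ} (hb : 0 < b) (hc : 0 < c) :
    InjOn (fun x => b * x - c / x) (Ioi (0:ℝ)) := by
  apply StrictMonoOn.injOn
  intro x hx y hy hxy
  have h1 : c / y < c / x := div_lt_div_of_pos_left hc hx hxy
  have h2 : b * x < b * y := by nlinarith
  simp only
  linarith

lemma glasser_sum {b c : ℝ} (hb : 0 < b) (hc : 0 < c) :
    ∫ x in Ioi (0:ℝ), (b + c / x ^ 2) * Real.exp (-(b * x - c / x) ^ 2)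
      = Real.sqrt Real.pi := by
  have key := integral_image_eq_integral_abs_deriv_smul (f := fun x => b * x - c / x)
    (f' := fun x => b + c / x ^ 2) measurableSet_Ioi (fun x hx => phi_deriv hx)
    (phi_injOn hb hc) (fun u => Real.exp (-u ^ 2))
  rw [phi_surj hb hc] at key
  calc ∫ x in Ioi (0:ℝ), (b + c / x ^ 2) * Real.exp (-(b * x - c / x) ^ 2)
      = ∫ x in Ioi (0:ℝ), |b + c / x ^ 2| • Real.exp (-(b * x - c / x) ^ 2) :=
        (setIntegral_congr_fun measurableSet_Ioi (fun x hx => by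
          rw [smul_eq_mul, abs_of_pos (show (0:ℝ) < b + c / x ^ 2 by
            have : x ∈ Ioi (0:ℝ) := hx
            positivity)])).symm
    _ = ∫ x in univ, Real.exp (-x ^ 2) := key.symm
    _ = Real.sqrt Real.pi := by
        rw [Measure.restrict_univ]; simpa using integral_gaussian 1

lemma glasser_integrable {b c : ℝ} (hb : 0 < b) (hc : 0 < c) :
    IntegrableOn (fun x => (b + c / x ^ 2) * Real.exp (-(b * x - c / x) ^ 2)) (Ioi (0:ℝ)) := by
  have key := (integrableOn_image_iff_integrableOn_abs_deriv_smul (f := fun x => b * x - c / x)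
    (f' := fun x => b + c / x ^ 2) measurableSet_Ioi (fun x hx => phi_deriv hx)
    (phi_injOn hb hc) (fun u => Real.exp (-u ^ 2))).mp
  rw [phi_surj hb hc] at key
  have h := key ((integrable_exp_neg_mul_sq one_pos).congr (by simp)).integrableOn
  apply h.congr_fun (fun x hx => by
    rw [smul_eq_mul, abs_of_pos (show (0:ℝ) < b + c / x ^ 2 by positivity)]) measurableSet_Ioi

lemma glasser_reflect {b c : ℝ} (hb : 0 < b) (hc : 0 < c) :
    ∫ x in Ioi (0:ℝ), b * Real.exp (-(b * x - c / x) ^ 2)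
      = ∫ x in Ioi (0:ℝ), (c / x ^ 2) * Real.exp (-(b * x - c / x) ^ 2) := by
  have hderiv : ∀ x ∈ Ioi (0:ℝ),
      HasDerivWithinAt (fun x : ℝ => c / (b * x)) (-(c / b / x ^ 2)) (Ioi 0) x := by
    intro x hx
    have hx0 : x ≠ 0 := ne_of_gt hx
    have h : HasDerivAt (fun x : ℝ => c / b * x⁻¹) (-(c / b / x ^ 2)) x := by
      have := (hasDerivAt_inv hx0).const_mul (c / b)
      simpa [div_eq_mul_inv, neg_div] using this
    exact (h.congr_of_eventuallyEq (by
      filter_upwards with y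
      rw [div_mul_eq_div_div, div_eq_mul_inv (c/b)])).hasDerivWithinAt
  have hinj : InjOn (fun x : ℝ => c / (b * x)) (Ioi 0) := by
    intro x hx y hy hxy
    have hx' : (0:ℝ) < x := hx
    have hy' : (0:ℝ) < y := hy
    have hx0 : (x:ℝ) ≠ 0 := hx'.ne'
    have hy0 : (y:ℝ) ≠ 0 := hy'.ne'
    field_simp at hxy
    linarith
  have himg : (fun x : ℝ => c / (b * x)) '' Ioi 0 = Ioi 0 := by
    apply Set.Subset.antisymm
    · rintro _ ⟨x, hx, rfl⟩
      have hx' : (0:ℝ) < x := hx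
      exact div_pos hc (by positivity)
    · intro y hy
      have hy' : (0:ℝ) < y := hy
      refine ⟨c / (b * y), div_pos hc (by positivity), ?_⟩
      have hy0 : (y:ℝ) ≠ 0 := ne_of_gt hy
      field_simp
  have key := integral_image_eq_integral_abs_deriv_smul (f := fun x : ℝ => c / (b * x))
    (f' := fun x : ℝ => -(c / b / x ^ 2)) measurableSet_Ioi hderiv hinj
    (fun u => Real.exp (-(b * u - c / u) ^ 2))
  rw [himg] at key
  have step : ∫ x in Ioi (0:ℝ), Real.exp (-(b * x - c / x) ^ 2)
      = ∫ x in Ioi (0:ℝ), (c / b / x ^ 2) * Real.exp (-(b * x - c / x) ^ 2) := by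
    rw [key]
    apply setIntegral_congr_fun measurableSet_Ioi
    intro x hx
    have hx' : (0:ℝ) < x := hx
    have hx0 : (x:ℝ) ≠ 0 := hx'.ne'
    have harg : b * (c / (b * x)) - c / (c / (b * x)) = -(b * x - c / x) := by
      field_simp
      ring
    simp only [smul_eq_mul]
    rw [harg, neg_sq, abs_neg, abs_of_pos (by positivity)]
  calc (∫ x in Ioi (0:ℝ), b * Real.exp (-(b * x - c / x) ^ 2))
      = b * ∫ x in Ioi (0:ℝ), Real.exp (-(b * x - c / x) ^ 2) := integral_const_mul b _
    _ = b * ∫ x in Ioi (0:ℝ), (c / b / x ^ 2) * Real.exp (-(b * x - c / x) ^ 2) := by rw [step]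
    _ = ∫ x in Ioi (0:ℝ), b * ((c / b / x ^ 2) * Real.exp (-(b * x - c / x) ^ 2)) :=
        (integral_const_mul b _).symm
    _ = ∫ x in Ioi (0:ℝ), (c / x ^ 2) * Real.exp (-(b * x - c / x) ^ 2) := by
        congr 1; funext x
        rw [← mul_assoc]
        congr 1
        rcases eq_or_ne x 0 with h | h
        · simp [h]
        · field_simp

lemma glasser_half {b c : ℝ} (hb : 0 < b) (hc : 0 < c) :
    ∫ x in Ioi (0:ℝ), Real.exp (-(b * x - c / x) ^ 2) = Real.sqrt Real.pi / (2 * b) := by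
  set g := fun x : ℝ => Real.exp (-(b * x - c / x) ^ 2) with hg
  have hint : IntegrableOn (fun x => (b + c / x ^ 2) * g x) (Ioi (0:ℝ)) :=
    glasser_integrable hb hc
  have hmeasg : AEStronglyMeasurable g (volume.restrict (Ioi 0)) := by
    apply Measurable.aestronglyMeasurable
    apply Real.measurable_exp.comp
    apply Measurable.neg
    exact ((measurable_const.mul measurable_id).sub
      (measurable_const.div measurable_id)).pow_const 2
  have hint1 : IntegrableOn (fun x => b * g x) (Ioi (0:ℝ)) := by
    apply hint.mono' (hmeasg.const_mul b)
    rw [ae_restrict_iff' measurableSet_Ioi]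
    filter_upwards with x hx
    have hx' : (0:ℝ) < x := hx
    have hgpos : (0:ℝ) < g x := Real.exp_pos _
    have h1 : (0:ℝ) ≤ c / x ^ 2 * g x := by positivity
    rw [Real.norm_eq_abs, abs_of_nonneg (by positivity)]
    nlinarith
  have hint2 : IntegrableOn (fun x => (c / x ^ 2) * g x) (Ioi (0:ℝ)) := by
    have h := hint.sub hint1
    exact h.congr (Filter.EventuallyEq.of_eq (by funext x; simp only [Pi.sub_apply]; ring))
  have hsplit : ∫ x in Ioi (0:ℝ), (b + c / x ^ 2) * g x
      = (∫ x in Ioi (0:ℝ), b * g x) + ∫ x in Ioi (0:ℝ), (c / x ^ 2) * g x := by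
    rw [← integral_add hint1 hint2]
    congr 1; funext x; ring
  have hsum : ∫ x in Ioi (0:ℝ), (b + c / x ^ 2) * g x = Real.sqrt Real.pi := glasser_sum hb hc
  have hrefl : ∫ x in Ioi (0:ℝ), b * g x = ∫ x in Ioi (0:ℝ), (c / x ^ 2) * g x :=
    glasser_reflect hb hc
  have h2 : 2 * (b * ∫ x in Ioi (0:ℝ), g x) = Real.sqrt Real.pi := by
    rw [← integral_const_mul b]
    rw [hsplit, ← hrefl] at hsum
    linarith
  field_simp
  linarith

lemma glasser_full {b c : ℝ} (hb : 0 < b) (hc : 0 < c) :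
    ∫ x in Ioi (0:ℝ), Real.exp (-(b ^ 2 * x ^ 2 + c ^ 2 / x ^ 2))
      = Real.sqrt Real.pi / (2 * b) * Real.exp (-(2 * b * c)) := by
  have hpt : ∀ x ∈ Ioi (0:ℝ), Real.exp (-(b ^ 2 * x ^ 2 + c ^ 2 / x ^ 2))
      = Real.exp (-(b * x - c / x) ^ 2) * Real.exp (-(2 * b * c)) := by
    intro x hx
    have hx0 : (x:ℝ) ≠ 0 := (show (0:ℝ) < x from hx).ne'
    rw [← Real.exp_add]
    congr 1
    field_simp
    ring
  rw [setIntegral_congr_fun measurableSet_Ioi hpt, integral_mul_const, glasser_half hb hc]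

lemma rpow_aux {x : ℝ} (hx : 0 < x) : ((x ^ 2)⁻¹ : ℝ) ^ (-(3:ℝ)/2) = x ^ (3:ℕ) := by
  have h1 : ((x ^ 2)⁻¹ : ℝ) = x ^ (-(2:ℝ)) := by
    rw [show (-(2:ℝ)) = -((2:ℕ):ℝ) by norm_num, Real.rpow_neg hx.le, Real.rpow_natCast]
  rw [h1, ← Real.rpow_natCast x 3, ← Real.rpow_mul hx.le]
  norm_num

open MeasureTheory in
theorem inverse_laplace_exp_sqrt (a s : ℝ) (ha : 0 < a) (hs : 0 < s) :
    ∫ y in Set.Ioi (0 : ℝ),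
        Real.exp (-s * y) * (Real.sqrt a / (2 * Real.sqrt Real.pi)
          * y ^ (-(3 : ℝ) / 2) * Real.exp (-a / (4 * y))) =
      Real.exp (-Real.sqrt (a * s)) := by
  set K := Real.sqrt a / (2 * Real.sqrt Real.pi) with hK
  set b := Real.sqrt a / 2 with hb'
  set c := Real.sqrt s with hc'
  have hb : 0 < b := by rw [hb']; positivity
  have hc : 0 < c := Real.sqrt_pos.mpr hs
  -- derivative of x ↦ (x²)⁻¹
  have hderiv : ∀ x ∈ Ioi (0:ℝ),
      HasDerivWithinAt (fun x : ℝ => (x ^ 2)⁻¹) (-(2 / x ^ 3)) (Ioi 0) x := by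
    intro x hx
    have hx' : (0:ℝ) < x := hx
    have h := (hasDerivAt_pow 2 x).inv (by positivity)
    have h2 : HasDerivAt (fun y : ℝ => (y ^ 2)⁻¹) (-(2 / x ^ 3)) x := by
      refine h.congr_deriv ?_
      have h21 : (2:ℕ) - 1 = 1 := rfl
      rw [h21, pow_one, Nat.cast_ofNat, neg_div, neg_inj,
        div_eq_div_iff (by positivity) (by positivity)]
      ring
    exact h2.hasDerivWithinAt
  have hinj : InjOn (fun x : ℝ => (x ^ 2)⁻¹) (Ioi 0) := by
    intro x hx y hy h
    have hx' : (0:ℝ) < x := hx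
    have hy' : (0:ℝ) < y := hy
    simp only at h
    field_simp at h
    exact (pow_left_inj₀ hx'.le hy'.le two_ne_zero).mp h.symm
  have himg : (fun x : ℝ => (x ^ 2)⁻¹) '' Ioi 0 = Ioi 0 := by
    apply Set.Subset.antisymm
    · rintro _ ⟨x, hx, rfl⟩
      have hx' : (0:ℝ) < x := hx
      simp only [Set.mem_Ioi]
      positivity
    · intro y hy
      have hy' : (0:ℝ) < y := hy
      refine ⟨(Real.sqrt y)⁻¹, Set.mem_Ioi.mpr (by positivity), ?_⟩
      simp only [inv_pow, inv_inv, Real.sq_sqrt hy'.le]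
  have key := integral_image_eq_integral_abs_deriv_smul (f := fun x : ℝ => (x ^ 2)⁻¹)
    (f' := fun x : ℝ => -(2 / x ^ 3)) measurableSet_Ioi hderiv hinj
    (fun y => Real.exp (-s * y) * (K * y ^ (-(3:ℝ)/2) * Real.exp (-a / (4 * y))))
  rw [himg] at key
  rw [key]
  have hpt : ∀ x ∈ Ioi (0:ℝ),
      |(-(2 / x ^ 3))| • (Real.exp (-s * (x ^ 2)⁻¹) *
        (K * ((x ^ 2)⁻¹) ^ (-(3:ℝ)/2) * Real.exp (-a / (4 * (x ^ 2)⁻¹))))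
      = (2 * K) * Real.exp (-(b ^ 2 * x ^ 2 + c ^ 2 / x ^ 2)) := by
    intro x hx
    have hx' : (0:ℝ) < x := hx
    have hx0 : (x:ℝ) ≠ 0 := hx'.ne'
    rw [smul_eq_mul, abs_neg, abs_of_pos (by positivity), rpow_aux hx']
    have harg : Real.exp (-s * (x ^ 2)⁻¹) * (K * x ^ (3:ℕ) * Real.exp (-a / (4 * (x ^ 2)⁻¹)))
        = K * x ^ (3:ℕ) * Real.exp (-(b ^ 2 * x ^ 2 + c ^ 2 / x ^ 2)) := by
      rw [mul_comm (Real.exp _), mul_assoc, ← Real.exp_add]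
      congr 2
      have hb2 : b ^ 2 = a / 4 := by
        rw [hb', div_pow, Real.sq_sqrt ha.le]; norm_num
      have hc2 : c ^ 2 = s := Real.sq_sqrt hs.le
      rw [hb2, hc2]
      field_simp
      ring
    rw [harg]
    field_simp
  rw [setIntegral_congr_fun measurableSet_Ioi hpt, integral_const_mul,
    glasser_full hb hc]
  have h1 : 2 * b * c = Real.sqrt (a * s) := by
    rw [hb', hc', Real.sqrt_mul ha.le]
    ring
  rw [h1, hK]
  have hπ : (0:ℝ) < Real.sqrt Real.pi := Real.sqrt_pos.mpr Real.pi_pos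
  have ha' : (0:ℝ) < Real.sqrt a := Real.sqrt_pos.mpr ha
  rw [hb']
  field_simp
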